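/- For the interval Θ = [−a, a] and the projection estimator θ̂ onto Θ in the model X ~ N(θ, 1), the normalized minimax risk satisfies inf_d sup_{θ∈Θ} E_θ[(d(X) − θ)²] / E_θ[(θ̂(X) − θ)²] ≤ 1/(4(1 − Φ(2a))). In particular, as a → 0 this upper bound tends to 1/2, so the worst-case normalized minimax constant C* is at most 1/2. -/

import Mathlib

open MeasureTheory ProbabilityTheory Real Set
open scoped ENNReal

noncomputable def stdNormalCDF (x : ℝ) : ℝ := ((gaussianReal 0 1) (Set.Iic x)).toReal

lemma gaussian_map_neg : (gaussianReal 0 1).map (fun y : ℝ => (-1 : ℝ) * y) = gaussianReal 0 1 := by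
  rw [gaussianReal_map_const_mul]
  norm_num

lemma gaussian_Iic_neg (x : ℝ) :
    (gaussianReal 0 1) (Set.Iic (-x)) = (gaussianReal 0 1) (Set.Ici x) := by
  conv_lhs => rw [← gaussian_map_neg]
  rw [Measure.map_apply (by fun_prop) measurableSet_Iic]
  congr 1
  ext y
  simp only [Set.mem_preimage, Set.mem_Iic, Set.mem_Ici]
  constructor <;> intro <;> linarith

lemma gaussian_shift_Iic (θ t : ℝ) :
    (gaussianReal θ 1) (Set.Iic t) = (gaussianReal 0 1) (Set.Iic (t - θ)) := by
  have h : (gaussianReal 0 1).map (· + θ) = gaussianReal θ 1 := by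
    rw [gaussianReal_map_add_const]; norm_num
  rw [← h, Measure.map_apply (by fun_prop) measurableSet_Iic]
  congr 1
  ext y
  simp only [Set.mem_preimage, Set.mem_Iic]
  constructor <;> intro <;> linarith

lemma gaussian_shift_Ici (θ t : ℝ) :
    (gaussianReal θ 1) (Set.Ici t) = (gaussianReal 0 1) (Set.Ici (t - θ)) := by
  have h : (gaussianReal 0 1).map (· + θ) = gaussianReal θ 1 := by
    rw [gaussianReal_map_add_const]; norm_num
  rw [← h, Measure.map_apply (by fun_prop) measurableSet_Ici]
  congr 1
  ext y
  simp only [Set.mem_preimage, Set.mem_Ici]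
  constructor <;> intro <;> linarith

lemma stdNormalCDF_lt_one (x : ℝ) : stdNormalCDF x < 1 := by
  have h2 : (gaussianReal 0 1) (Set.Ioi x) ≠ 0 := by
    intro h
    have := gaussianReal_absolutelyContinuous' 0 one_ne_zero h
    rw [Real.volume_Ioi] at this
    exact ENNReal.top_ne_zero this
  have h1 : (gaussianReal 0 1) (Set.Iic x) + (gaussianReal 0 1) (Set.Ioi x) = 1 := by
    rw [← measure_union (Set.Iic_disjoint_Ioi le_rfl) measurableSet_Ioi, Set.Iic_union_Ioi,
      measure_univ]
  have hlt : (gaussianReal 0 1) (Set.Iic x) < 1 := by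
    calc (gaussianReal 0 1) (Set.Iic x)
        < (gaussianReal 0 1) (Set.Iic x) + (gaussianReal 0 1) (Set.Ioi x) :=
          ENNReal.lt_add_right (measure_ne_top _ _) h2
      _ = 1 := h1
  have := (ENNReal.toReal_lt_toReal (measure_ne_top _ _) ENNReal.one_ne_top).mpr hlt
  simpa [stdNormalCDF] using this

lemma stdNormalCDF_mono {s t : ℝ} (h : s ≤ t) : stdNormalCDF s ≤ stdNormalCDF t :=
  ENNReal.toReal_le_toReal (measure_ne_top _ _) (measure_ne_top _ _) |>.mpr
    (measure_mono (Set.Iic_subset_Iic.mpr h))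

lemma gaussian_Ici_ge (x : ℝ) :
    1 - stdNormalCDF x ≤ ((gaussianReal 0 1) (Set.Ici x)).toReal := by
  have hcov : (1 : ℝ≥0∞) ≤ (gaussianReal 0 1) (Set.Iic x) + (gaussianReal 0 1) (Set.Ici x) := by
    rw [← measure_univ (μ := gaussianReal 0 1)]
    refine le_trans (measure_mono ?_) (measure_union_le _ _)
    intro y _
    rcases le_total y x with h | h
    · exact Or.inl h
    · exact Or.inr h
  have := ENNReal.toReal_le_toReal ENNReal.one_ne_top (by
    exact ENNReal.add_ne_top.mpr ⟨measure_ne_top _ _, measure_ne_top _ _⟩) |>.mpr hcov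
  rw [ENNReal.toReal_add (measure_ne_top _ _) (measure_ne_top _ _)] at this
  simp only [ENNReal.toReal_one] at this
  unfold stdNormalCDF
  linarith

lemma stdNormalCDF_zero : stdNormalCDF 0 = 1 / 2 := by
  have hsing : (gaussianReal 0 1) ({0} : Set ℝ) = 0 :=
    gaussianReal_absolutelyContinuous 0 one_ne_zero Real.volume_singleton
  have hIciIoi : (gaussianReal 0 1) (Set.Ici (0:ℝ)) = (gaussianReal 0 1) (Set.Ioi (0:ℝ)) := by
    have : Set.Ici (0:ℝ) = {0} ∪ Set.Ioi 0 := by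
      ext y; simp [le_iff_lt_or_eq, eq_comm, or_comm]
    rw [this, measure_union (by simp) measurableSet_Ioi, hsing, zero_add]
  have hsym : (gaussianReal 0 1) (Set.Iic (0:ℝ)) = (gaussianReal 0 1) (Set.Ici (0:ℝ)) := by
    have := gaussian_Iic_neg 0
    simpa using this
  have h1 : (gaussianReal 0 1) (Set.Iic (0:ℝ)) + (gaussianReal 0 1) (Set.Ioi (0:ℝ)) = 1 := by
    rw [← measure_union (Set.Iic_disjoint_Ioi le_rfl) measurableSet_Ioi, Set.Iic_union_Ioi,
      measure_univ]
  rw [hsym, hIciIoi] at h1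
  have h2 : (2 : ℝ≥0∞) * (gaussianReal 0 1) (Set.Ioi (0:ℝ)) = 1 := by
    rw [two_mul]; exact h1
  have h3 : (gaussianReal 0 1) (Set.Ioi (0:ℝ)) = 1 / 2 :=
    (ENNReal.eq_div_iff (by norm_num) (by norm_num)).mpr h2
  unfold stdNormalCDF
  rw [hsym, hIciIoi, h3]
  simp [ENNReal.toReal_div]

lemma stdNormalCDF_eq_integral (x : ℝ) :
    stdNormalCDF x = ∫ t in Set.Iic x, gaussianPDFReal 0 1 t := by
  rw [stdNormalCDF, gaussianReal_apply_eq_integral 0 one_ne_zero,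
    ENNReal.toReal_ofReal (integral_nonneg fun t => gaussianPDFReal_nonneg 0 1 t)]

lemma stdNormalCDF_continuous : Continuous stdNormalCDF := by
  have hint := integrable_gaussianPDFReal 0 1
  have hprim : Continuous fun x : ℝ => ∫ t in (0:ℝ)..x, gaussianPDFReal 0 1 t :=
    hint.continuous_primitive 0
  have heq : ∀ x : ℝ, stdNormalCDF x = stdNormalCDF 0 + ∫ t in (0:ℝ)..x, gaussianPDFReal 0 1 t := by
    intro x
    rw [stdNormalCDF_eq_integral, stdNormalCDF_eq_integral,
      ← intervalIntegral.integral_Iic_sub_Iic hint.integrableOn hint.integrableOn]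
    ring
  have : Continuous fun x => stdNormalCDF 0 + ∫ t in (0:ℝ)..x, gaussianPDFReal 0 1 t :=
    continuous_const.add hprim
  exact this.congr fun x => (heq x).symm

theorem stmt16 (a : ℝ) (ha : 0 < a) :
    (∃ d : ℝ → ℝ, Measurable d ∧ ∀ θ ∈ Set.Icc (-a) a,
      ∫ x, (d x - θ) ^ 2 ∂(gaussianReal θ 1) ≤
        (1 / (4 * (1 - stdNormalCDF (2 * a)))) *
          ∫ x, (max (-a) (min a x) - θ) ^ 2 ∂(gaussianReal θ 1)) ∧
    Filter.Tendsto (fun b : ℝ => 1 / (4 * (1 - stdNormalCDF (2 * b))))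
      (nhdsWithin 0 (Set.Ioi 0)) (nhds (1 / 2)) := by
  constructor
  · refine ⟨fun _ => 0, measurable_const, fun θ hθ => ?_⟩
    obtain ⟨hθ1, hθ2⟩ := hθ
    set μθ := gaussianReal θ 1
    set c := 1 - stdNormalCDF (2 * a) with hc
    have hcpos : 0 < c := by
      have := stdNormalCDF_lt_one (2 * a)
      linarith
    -- LHS = θ²
    have hLHS : ∫ x, ((fun _ => (0:ℝ)) x - θ) ^ 2 ∂μθ = θ ^ 2 := by
      simp [μθ, mul_comm]
    -- integrand f
    set f : ℝ → ℝ := fun x => (max (-a) (min a x) - θ) ^ 2 with hf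
    have hfnn : ∀ x, 0 ≤ f x := fun x => sq_nonneg _
    have hfmeas : Measurable f := by fun_prop
    have hfbdd : ∀ x, ‖f x‖ ≤ (a + |θ|) ^ 2 := by
      intro x
      rw [Real.norm_eq_abs, abs_of_nonneg (hfnn x)]
      have h1 : -a ≤ max (-a) (min a x) := le_max_left _ _
      have h2 : max (-a) (min a x) ≤ a := by
        apply max_le (by linarith) (min_le_left _ _)
      have h3 : |θ| < a + 1 := by
        rw [abs_lt]; constructor <;> linarith
      have : |max (-a) (min a x) - θ| ≤ a + |θ| := by
        rw [abs_le]
        rcases abs_le.mp (le_refl |θ|) with ⟨hl, hr⟩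
        constructor <;> nlinarith [neg_abs_le θ, le_abs_self θ]
      calc (max (-a) (min a x) - θ) ^ 2 = |max (-a) (min a x) - θ| ^ 2 := (sq_abs _).symm
        _ ≤ (a + |θ|) ^ 2 := by
            apply pow_le_pow_left₀ (abs_nonneg _) this
    have hfint : Integrable f μθ := by
      refine Integrable.mono' (integrable_const ((a + |θ|) ^ 2)) hfmeas.aestronglyMeasurable ?_
      exact Filter.Eventually.of_forall hfbdd
    -- measure bounds
    have hIicbound : c ≤ (μθ (Set.Iic (-a))).toReal := by
      have h1 : μθ (Set.Iic (-a)) = (gaussianReal 0 1) (Set.Ici (a + θ)) := by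
        rw [gaussian_shift_Iic]
        have : -a - θ = -(a + θ) := by ring
        rw [this, gaussian_Iic_neg]
      have h2 : (gaussianReal 0 1) (Set.Ici (2 * a)) ≤ (gaussianReal 0 1) (Set.Ici (a + θ)) :=
        measure_mono (Set.Ici_subset_Ici.mpr (by linarith))
      have h3 := gaussian_Ici_ge (2 * a)
      have h4 := ENNReal.toReal_le_toReal (measure_ne_top _ _) (measure_ne_top _ _) |>.mpr h2
      rw [h1]
      linarith
    have hIcibound : c ≤ (μθ (Set.Ici a)).toReal := by
      have h1 : μθ (Set.Ici a) = (gaussianReal 0 1) (Set.Ici (a - θ)) := gaussian_shift_Ici θ a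
      have h2 : (gaussianReal 0 1) (Set.Ici (2 * a)) ≤ (gaussianReal 0 1) (Set.Ici (a - θ)) :=
        measure_mono (Set.Ici_subset_Ici.mpr (by linarith))
      have h3 := gaussian_Ici_ge (2 * a)
      have h4 := ENNReal.toReal_le_toReal (measure_ne_top _ _) (measure_ne_top _ _) |>.mpr h2
      rw [h1]
      linarith
    -- set integrals
    have hsetIic : ∫ x in Set.Iic (-a), f x ∂μθ = (μθ (Set.Iic (-a))).toReal * (-a - θ) ^ 2 := by
      rw [setIntegral_congr_fun measurableSet_Iic (g := fun _ => (-a - θ) ^ 2) ?_, setIntegral_const,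
        smul_eq_mul, measureReal_def]
      intro x hx
      simp only [Set.mem_Iic] at hx
      have h1 : min a x = x := min_eq_right (by linarith)
      have h2 : max (-a) x = -a := max_eq_left hx
      simp [f, h1, h2]
    have hsetIci : ∫ x in Set.Ici a, f x ∂μθ = (μθ (Set.Ici a)).toReal * (a - θ) ^ 2 := by
      rw [setIntegral_congr_fun measurableSet_Ici (g := fun _ => (a - θ) ^ 2) ?_, setIntegral_const,
        smul_eq_mul, measureReal_def]
      intro x hx
      simp only [Set.mem_Ici] at hx
      have h1 : min a x = a := min_eq_left hx
      have h2 : max (-a) a = a := max_eq_right (by linarith)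
      simp [f, h1, h2]
    have hsplit : ∫ x in Set.Iic (-a) ∪ Set.Ici a, f x ∂μθ
        = ∫ x in Set.Iic (-a), f x ∂μθ + ∫ x in Set.Ici a, f x ∂μθ := by
      apply setIntegral_union ?_ measurableSet_Ici hfint.integrableOn hfint.integrableOn
      rw [Set.disjoint_iff]
      intro x ⟨hx1, hx2⟩
      simp only [Set.mem_Iic, Set.mem_Ici] at hx1 hx2
      exact absurd (le_trans hx2 hx1) (by linarith)
    have hle : ∫ x in Set.Iic (-a) ∪ Set.Ici a, f x ∂μθ ≤ ∫ x, f x ∂μθ :=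
      setIntegral_le_integral hfint (Filter.Eventually.of_forall hfnn)
    have hkey : c * ((-a - θ) ^ 2 + (a - θ) ^ 2) ≤ ∫ x, f x ∂μθ := by
      have e1 : c * (-a - θ) ^ 2 ≤ (μθ (Set.Iic (-a))).toReal * (-a - θ) ^ 2 :=
        mul_le_mul_of_nonneg_right hIicbound (sq_nonneg _)
      have e2 : c * (a - θ) ^ 2 ≤ (μθ (Set.Ici a)).toReal * (a - θ) ^ 2 :=
        mul_le_mul_of_nonneg_right hIcibound (sq_nonneg _)
      rw [hsplit, hsetIic, hsetIci] at hle
      nlinarith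
    rw [hLHS]
    have hfinal : θ ^ 2 ≤ (1 / (4 * c)) * (c * ((-a - θ) ^ 2 + (a - θ) ^ 2)) := by
      have hθsq : θ ^ 2 ≤ a ^ 2 := by nlinarith
      rw [div_mul_eq_mul_div, one_mul, le_div_iff₀ (by positivity)]
      nlinarith [mul_nonneg hcpos.le (sub_nonneg.mpr hθsq)]
    calc θ ^ 2 ≤ (1 / (4 * c)) * (c * ((-a - θ) ^ 2 + (a - θ) ^ 2)) := hfinal
      _ ≤ (1 / (4 * c)) * ∫ x, f x ∂μθ := by
          apply mul_le_mul_of_nonneg_left hkey (by positivity)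
  · have hcont : ContinuousAt (fun b : ℝ => 1 / (4 * (1 - stdNormalCDF (2 * b)))) 0 := by
      apply ContinuousAt.div continuousAt_const
      · exact (continuousAt_const.mul ((continuousAt_const.sub
          ((stdNormalCDF_continuous.continuousAt).comp
            ((continuous_const.mul continuous_id).continuousAt)))))
      · simp [stdNormalCDF_zero]
        norm_num
    have hval : (fun b : ℝ => 1 / (4 * (1 - stdNormalCDF (2 * b)))) 0 = 1 / 2 := by
      simp [stdNormalCDF_zero]
      norm_num
    rw [← hval]
    exact hcont.tendsto.mono_left nhdsWithin_le_nhds
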